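/- Let r : ℂ × ℂ → A⊗A satisfy the associative Yang–Baxter equation r^{12}(−u',v)·r^{13}(u+u',v+v') − r^{23}(u+u',v')·r^{12}(u,v) + r^{13}(u,v+v')·r^{23}(u',v') = 0 and the unitarity condition r^{21}(−u,−v) = −r(u,v) for all u, u', v, v' ∈ ℂ. Set s(u,v) = r(u,v)·r(−u,v) ∈ A⊗A. Then for all u1, u2, u3, v1, v2, v3 ∈ ℂ, writing u_{ij} = u_i − u_j and v_{ij} = v_i − v_j, the following three expressions are equal: (I) r^{12}(u_{12},v_{12})·r^{13}(u_{23},v_{13})·r^{23}(u_{12},v_{23}) − r^{23}(u_{23},v_{23})·r^{13}(u_{12},v_{13})·r^{12}(u_{23},v_{12}); (II) s^{23}(u_{23},v_{23})·r^{13}(u_{13},v_{13}) − r^{13}(u_{13},v_{13})·s^{23}(u_{21},v_{23}); (III) r^{13}(u_{13},v_{13})·s^{12}(u_{32},v_{12}) − s^{12}(u_{12},v_{12})·r^{13}(u_{13},v_{13}). -/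

import Mathlib

open scoped TensorProduct
set_option maxHeartbeats 1000000
noncomputable section

/-- The algebra of `S × S` complex matrices. -/
abbrev Mat (S : Type) := Matrix S S ℂ
/-- `A ⊗ A`. -/
abbrev TT (S : Type) := Mat S ⊗[ℂ] Mat S
/-- `A ⊗ A ⊗ A`. -/
abbrev TTT (S : Type) := Mat S ⊗[ℂ] (Mat S ⊗[ℂ] Mat S)

variable (S : Type) [Fintype S] [DecidableEq S]

/-- Matrix units `e_{ij}`. -/
def E (i j : S) : Mat S := Matrix.single i j 1

/-- `x^{12}`: `a ⊗ b ↦ a ⊗ b ⊗ 1`. -/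
def leg12 : TT S →ₐ[ℂ] TTT S :=
  Algebra.TensorProduct.map (AlgHom.id ℂ (Mat S))
    (Algebra.TensorProduct.includeLeft (R := ℂ) (A := Mat S) (B := Mat S))

/-- `x^{13}`: `a ⊗ b ↦ a ⊗ 1 ⊗ b`. -/
def leg13 : TT S →ₐ[ℂ] TTT S :=
  Algebra.TensorProduct.map (AlgHom.id ℂ (Mat S))
    (Algebra.TensorProduct.includeRight (R := ℂ) (A := Mat S) (B := Mat S))

/-- `x^{23}`: `a ⊗ b ↦ 1 ⊗ a ⊗ b`. -/
def leg23 : TT S →ₐ[ℂ] TTT S :=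
  Algebra.TensorProduct.includeRight (R := ℂ) (A := Mat S) (B := TT S)

/-- `x^{21}`: `a ⊗ b ↦ b ⊗ a`. -/
def flip21 : TT S →ₐ[ℂ] TT S :=
  (Algebra.TensorProduct.comm ℂ (Mat S) (Mat S)).toAlgHom

set_option synthInstance.maxHeartbeats 1000000

/-- The algebra automorphism of `A ⊗ A ⊗ A` exchanging the first and third factors. -/
def sigma13 : TTT S →ₐ[ℂ] TTT S :=
  ((Algebra.TensorProduct.assoc ℂ ℂ ℂ (Mat S) (Mat S) (Mat S)).toAlgHom).comp
    (((Algebra.TensorProduct.comm ℂ (Mat S) (TT S)).toAlgHom).comp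
      (Algebra.TensorProduct.map (AlgHom.id ℂ (Mat S)) (flip21 S)))

lemma sigma13_leg12 (x : TT S) : sigma13 S (leg12 S x) = leg23 S (flip21 S x) := by
  induction x using TensorProduct.induction_on with
  | zero => simp
  | tmul a b => simp [sigma13, leg12, leg23, flip21]
  | add x y hx hy => simp only [map_add, hx, hy]

lemma sigma13_leg13 (x : TT S) : sigma13 S (leg13 S x) = leg13 S (flip21 S x) := by
  induction x using TensorProduct.induction_on with
  | zero => simp
  | tmul a b => simp [sigma13, leg13, flip21]
  | add x y hx hy => simp only [map_add, hx, hy]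

lemma sigma13_leg23 (x : TT S) : sigma13 S (leg23 S x) = leg12 S (flip21 S x) := by
  induction x using TensorProduct.induction_on with
  | zero => simp
  | tmul a b => simp [sigma13, leg12, leg23, flip21]
  | add x y hx hy => simp only [map_add, hx, hy]

/-! Ring-operation helper lemmas for `TTT S`, stated so that they match the instances
appearing in the statements below. -/

variable {S}

lemma taddmul (x y z : TTT S) : (x + y) * z = x * z + y * z := Distrib.right_distrib x y z
lemma tmuladd (x y z : TTT S) : x * (y + z) = x * y + x * z := Distrib.left_distrib x y z
lemma tsubmul (x y z : TTT S) : (x - y) * z = x * z - y * z := _root_.sub_mul x y z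
lemma tmulsub (x y z : TTT S) : x * (y - z) = x * y - x * z := _root_.mul_sub x y z
lemma tmulassoc (x y z : TTT S) : x * y * z = x * (y * z) := _root_.mul_assoc x y z
lemma tzeromul (y : TTT S) : (0 : TTT S) * y = 0 := MulZeroClass.zero_mul y
lemma tmulzero (y : TTT S) : y * (0 : TTT S) = 0 := MulZeroClass.mul_zero y
lemma tnegmul (x y : TTT S) : -x * y = -(x * y) :=
  @_root_.neg_mul (TTT S) _ NonUnitalNonAssocRing.toHasDistribNeg x y
lemma tmulneg (x y : TTT S) : x * -y = -(x * y) :=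
  @_root_.mul_neg (TTT S) _ NonUnitalNonAssocRing.toHasDistribNeg x y
lemma tnegmulneg (x y : TTT S) : -x * -y = x * y :=
  @_root_.neg_mul_neg (TTT S) _ NonUnitalNonAssocRing.toHasDistribNeg x y

variable (S)

lemma leg12_neg (x : TT S) : leg12 S (-x) = -(leg12 S x) := map_neg _ x
lemma leg13_neg (x : TT S) : leg13 S (-x) = -(leg13 S x) := map_neg _ x
lemma leg23_neg (x : TT S) : leg23 S (-x) = -(leg23 S x) := map_neg _ x

/-- The "dual" AYBE obtained by applying the 13-swap and unitarity. -/
lemma dual_AYBE (N : ℕ) (r : ℂ → ℂ → TT (Fin N))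
    (hAYBE : ∀ u u' v v' : ℂ,
      leg12 (Fin N) (r (-u') v) * leg13 (Fin N) (r (u + u') (v + v'))
        - leg23 (Fin N) (r (u + u') v') * leg12 (Fin N) (r u v)
        + leg13 (Fin N) (r u (v + v')) * leg23 (Fin N) (r u' v') = 0)
    (hunit : ∀ u v : ℂ, flip21 (Fin N) (r (-u) (-v)) = - r u v)
    (p q V V' : ℂ) :
    leg23 (Fin N) (r (-p) V) * leg13 (Fin N) (r (p + q) (V + V'))
      - leg12 (Fin N) (r (p + q) V') * leg23 (Fin N) (r q V)
      + leg13 (Fin N) (r q (V + V')) * leg12 (Fin N) (r p V') = 0 := by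
  have hunit' : ∀ u v : ℂ, flip21 (Fin N) (r u v) = - r (-u) (-v) := by
    intro u v
    have h := hunit (-u) (-v)
    rwa [neg_neg, neg_neg] at h
  have h := hAYBE (-q) (-p) (-V) (-V')
  rw [neg_neg, show (-q) + (-p) = -(p + q) by ring, show (-V) + (-V') = -(V + V') by ring] at h
  have h2 := congrArg (sigma13 (Fin N)) h
  simp only [map_add, map_sub, map_mul, map_zero, sigma13_leg12, sigma13_leg13,
    sigma13_leg23, hunit', neg_neg, leg12_neg, leg13_neg, leg23_neg, tnegmulneg] at h2
  exact h2

/-- Lemma `main-AYBE-lem1`: for a unitary solution of the AYBE, setting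
`s(u,v) = r(u,v)·r(−u,v)`, the three displayed expressions coincide. -/
theorem stmt6 (N : ℕ)
    (r : ℂ → ℂ → TT (Fin N))
    (hAYBE : ∀ u u' v v' : ℂ,
      leg12 (Fin N) (r (-u') v) * leg13 (Fin N) (r (u + u') (v + v'))
        - leg23 (Fin N) (r (u + u') v') * leg12 (Fin N) (r u v)
        + leg13 (Fin N) (r u (v + v')) * leg23 (Fin N) (r u' v') = 0)
    (hunit : ∀ u v : ℂ, flip21 (Fin N) (r (-u) (-v)) = - r u v)
    (s : ℂ → ℂ → TT (Fin N))
    (hs : ∀ u v : ℂ, s u v = r u v * r (-u) v) :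
    ∀ u1 u2 u3 v1 v2 v3 : ℂ,
      (leg12 (Fin N) (r (u1 - u2) (v1 - v2)) * leg13 (Fin N) (r (u2 - u3) (v1 - v3))
            * leg23 (Fin N) (r (u1 - u2) (v2 - v3))
          - leg23 (Fin N) (r (u2 - u3) (v2 - v3)) * leg13 (Fin N) (r (u1 - u2) (v1 - v3))
            * leg12 (Fin N) (r (u2 - u3) (v1 - v2))
        = leg23 (Fin N) (s (u2 - u3) (v2 - v3)) * leg13 (Fin N) (r (u1 - u3) (v1 - v3))
          - leg13 (Fin N) (r (u1 - u3) (v1 - v3)) * leg23 (Fin N) (s (u2 - u1) (v2 - v3)))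
      ∧ (leg23 (Fin N) (s (u2 - u3) (v2 - v3)) * leg13 (Fin N) (r (u1 - u3) (v1 - v3))
            - leg13 (Fin N) (r (u1 - u3) (v1 - v3)) * leg23 (Fin N) (s (u2 - u1) (v2 - v3))
        = leg13 (Fin N) (r (u1 - u3) (v1 - v3)) * leg12 (Fin N) (s (u3 - u2) (v1 - v2))
          - leg12 (Fin N) (s (u1 - u2) (v1 - v2)) * leg13 (Fin N) (r (u1 - u3) (v1 - v3))) := by
  intro u1 u2 u3 v1 v2 v3
  -- hA : R12(u12,v12) R13(u23,v13) = R23(u23,v23) R12(u13,v12) - R13(u13,v13) R23(u21,v23)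
  have hA : leg12 (Fin N) (r (u1 - u2) (v1 - v2)) * leg13 (Fin N) (r (u2 - u3) (v1 - v3))
      = leg23 (Fin N) (r (u2 - u3) (v2 - v3)) * leg12 (Fin N) (r (u1 - u3) (v1 - v2))
        - leg13 (Fin N) (r (u1 - u3) (v1 - v3)) * leg23 (Fin N) (r (u2 - u1) (v2 - v3)) := by
    have h := hAYBE (u1 - u3) (u2 - u1) (v1 - v2) (v2 - v3)
    rw [show -(u2 - u1) = u1 - u2 by ring, show (u1 - u3) + (u2 - u1) = u2 - u3 by ring,
      show (v1 - v2) + (v2 - v3) = v1 - v3 by ring] at h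
    apply sub_eq_zero.mp
    rw [← h]; abel
  -- hB : R12(u13,v12) R23(u12,v23) = R23(u32,v23) R13(u13,v13) + R13(u12,v13) R12(u23,v12)
  have hB : leg12 (Fin N) (r (u1 - u3) (v1 - v2)) * leg23 (Fin N) (r (u1 - u2) (v2 - v3))
      = leg23 (Fin N) (r (u3 - u2) (v2 - v3)) * leg13 (Fin N) (r (u1 - u3) (v1 - v3))
        + leg13 (Fin N) (r (u1 - u2) (v1 - v3)) * leg12 (Fin N) (r (u2 - u3) (v1 - v2)) := by
    have h := dual_AYBE N r hAYBE hunit (u2 - u3) (u1 - u2) (v2 - v3) (v1 - v2)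
    rw [show -(u2 - u3) = u3 - u2 by ring, show (u2 - u3) + (u1 - u2) = u1 - u3 by ring,
      show (v2 - v3) + (v1 - v2) = v1 - v3 by ring] at h
    symm
    apply sub_eq_zero.mp
    rw [← h]; abel
  -- hE : R13(u23,v13) R23(u12,v23) = R23(u13,v23) R12(u23,v12) - R12(u21,v12) R13(u13,v13)
  have hE : leg13 (Fin N) (r (u2 - u3) (v1 - v3)) * leg23 (Fin N) (r (u1 - u2) (v2 - v3))
      = leg23 (Fin N) (r (u1 - u3) (v2 - v3)) * leg12 (Fin N) (r (u2 - u3) (v1 - v2))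
        - leg12 (Fin N) (r (u2 - u1) (v1 - v2)) * leg13 (Fin N) (r (u1 - u3) (v1 - v3)) := by
    have h := hAYBE (u2 - u3) (u1 - u2) (v1 - v2) (v2 - v3)
    rw [show -(u1 - u2) = u2 - u1 by ring, show (u2 - u3) + (u1 - u2) = u1 - u3 by ring,
      show (v1 - v2) + (v2 - v3) = v1 - v3 by ring] at h
    apply sub_eq_zero.mp
    rw [← h]; abel
  -- hF : R23(u23,v23) R13(u12,v13) = R12(u12,v12) R23(u13,v23) - R13(u13,v13) R12(u32,v12)
  have hF : leg23 (Fin N) (r (u2 - u3) (v2 - v3)) * leg13 (Fin N) (r (u1 - u2) (v1 - v3))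
      = leg12 (Fin N) (r (u1 - u2) (v1 - v2)) * leg23 (Fin N) (r (u1 - u3) (v2 - v3))
        - leg13 (Fin N) (r (u1 - u3) (v1 - v3)) * leg12 (Fin N) (r (u3 - u2) (v1 - v2)) := by
    have h := dual_AYBE N r hAYBE hunit (u3 - u2) (u1 - u3) (v2 - v3) (v1 - v2)
    rw [show -(u3 - u2) = u2 - u3 by ring, show (u3 - u2) + (u1 - u3) = u1 - u2 by ring,
      show (v2 - v3) + (v1 - v2) = v1 - v3 by ring] at h
    apply sub_eq_zero.mp
    rw [← h]; abel
  -- the four `s`-products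
  have hS1 : leg23 (Fin N) (r (u2 - u3) (v2 - v3)) * leg23 (Fin N) (r (u3 - u2) (v2 - v3))
      = leg23 (Fin N) (s (u2 - u3) (v2 - v3)) := by
    rw [hs, map_mul, show -(u2 - u3) = u3 - u2 by ring]
  have hS2 : leg23 (Fin N) (r (u2 - u1) (v2 - v3)) * leg23 (Fin N) (r (u1 - u2) (v2 - v3))
      = leg23 (Fin N) (s (u2 - u1) (v2 - v3)) := by
    rw [hs, map_mul, show -(u2 - u1) = u1 - u2 by ring]
  have hS3 : leg12 (Fin N) (r (u1 - u2) (v1 - v2)) * leg12 (Fin N) (r (u2 - u1) (v1 - v2))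
      = leg12 (Fin N) (s (u1 - u2) (v1 - v2)) := by
    rw [hs, map_mul, show -(u1 - u2) = u2 - u1 by ring]
  have hS4 : leg12 (Fin N) (r (u3 - u2) (v1 - v2)) * leg12 (Fin N) (r (u2 - u3) (v1 - v2))
      = leg12 (Fin N) (s (u3 - u2) (v1 - v2)) := by
    rw [hs, map_mul, show -(u3 - u2) = u2 - u3 by ring]
  -- assembling
  have h1 : leg12 (Fin N) (r (u1 - u2) (v1 - v2)) * leg13 (Fin N) (r (u2 - u3) (v1 - v3))
        * leg23 (Fin N) (r (u1 - u2) (v2 - v3))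
      - leg23 (Fin N) (r (u2 - u3) (v2 - v3)) * leg13 (Fin N) (r (u1 - u2) (v1 - v3))
        * leg12 (Fin N) (r (u2 - u3) (v1 - v2))
      = leg23 (Fin N) (s (u2 - u3) (v2 - v3)) * leg13 (Fin N) (r (u1 - u3) (v1 - v3))
        - leg13 (Fin N) (r (u1 - u3) (v1 - v3)) * leg23 (Fin N) (s (u2 - u1) (v2 - v3)) := by
    have e1 : leg12 (Fin N) (r (u1 - u2) (v1 - v2)) * leg13 (Fin N) (r (u2 - u3) (v1 - v3))
          * leg23 (Fin N) (r (u1 - u2) (v2 - v3))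
        = leg23 (Fin N) (r (u2 - u3) (v2 - v3)) *
            (leg12 (Fin N) (r (u1 - u3) (v1 - v2)) * leg23 (Fin N) (r (u1 - u2) (v2 - v3)))
          - leg13 (Fin N) (r (u1 - u3) (v1 - v3)) *
            (leg23 (Fin N) (r (u2 - u1) (v2 - v3)) * leg23 (Fin N) (r (u1 - u2) (v2 - v3))) := by
      rw [hA]
      simp only [tsubmul, tmulassoc]
    rw [e1, hB, hS2, ← hS1]
    simp only [tmuladd, tmulassoc]
    abel
  have h2 : leg12 (Fin N) (r (u1 - u2) (v1 - v2)) * leg13 (Fin N) (r (u2 - u3) (v1 - v3))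
        * leg23 (Fin N) (r (u1 - u2) (v2 - v3))
      - leg23 (Fin N) (r (u2 - u3) (v2 - v3)) * leg13 (Fin N) (r (u1 - u2) (v1 - v3))
        * leg12 (Fin N) (r (u2 - u3) (v1 - v2))
      = leg13 (Fin N) (r (u1 - u3) (v1 - v3)) * leg12 (Fin N) (s (u3 - u2) (v1 - v2))
        - leg12 (Fin N) (s (u1 - u2) (v1 - v2)) * leg13 (Fin N) (r (u1 - u3) (v1 - v3)) := by
    have e2 : leg12 (Fin N) (r (u1 - u2) (v1 - v2)) * leg13 (Fin N) (r (u2 - u3) (v1 - v3))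
          * leg23 (Fin N) (r (u1 - u2) (v2 - v3))
        = leg12 (Fin N) (r (u1 - u2) (v1 - v2)) *
            (leg23 (Fin N) (r (u1 - u3) (v2 - v3)) * leg12 (Fin N) (r (u2 - u3) (v1 - v2)))
          - (leg12 (Fin N) (r (u1 - u2) (v1 - v2)) * leg12 (Fin N) (r (u2 - u1) (v1 - v2)))
            * leg13 (Fin N) (r (u1 - u3) (v1 - v3)) := by
      rw [tmulassoc, hE]
      simp only [tmulsub, tmulassoc]
    have e3 : leg23 (Fin N) (r (u2 - u3) (v2 - v3)) * leg13 (Fin N) (r (u1 - u2) (v1 - v3))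
          * leg12 (Fin N) (r (u2 - u3) (v1 - v2))
        = leg12 (Fin N) (r (u1 - u2) (v1 - v2)) *
            (leg23 (Fin N) (r (u1 - u3) (v2 - v3)) * leg12 (Fin N) (r (u2 - u3) (v1 - v2)))
          - leg13 (Fin N) (r (u1 - u3) (v1 - v3)) *
            (leg12 (Fin N) (r (u3 - u2) (v1 - v2)) * leg12 (Fin N) (r (u2 - u3) (v1 - v2))) := by
      rw [hF]
      simp only [tsubmul, tmulassoc]
    rw [e2, e3, hS3, hS4]
    abel
  exact ⟨h1, by rw [← h1]; exact h2⟩
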